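/- Let p and q be compatible rational numbers with 0 ≤ p < q ≤ 1, and let r be any rational number with p < r < q. Then the reduced denominator of r satisfies r.den ≥ p.den + q.den; in particular, the denominator of r is at least the denominator of the mediant p ⊕ q. -/

import Mathlib

/-- Rationals `p, q` (in reduced form) are compatible if `|p.num * q.den - q.num * p.den| = 1`. -/
def FareyCompatible (p q : ℚ) : Prop :=
  |p.num * (q.den : ℤ) - q.num * (p.den : ℤ)| = 1

/-- Any rational strictly between two compatible rationals `p < q` has reduced
denominator at least `p.den + q.den`, the denominator of their mediant. -/
theorem denom_ge_of_between (p q r : ℚ) (hp : 0 ≤ p) (hpq : p < q) (hq : q ≤ 1)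
    (hcompat : FareyCompatible p q) (hpr : p < r) (hrq : r < q) :
    p.den + q.den ≤ r.den := by
  have h1 : p.num * r.den < r.num * p.den := (Rat.lt_iff p r).mp hpr
  have h2 : r.num * q.den < q.num * r.den := (Rat.lt_iff r q).mp hrq
  have h3 : p.num * q.den < q.num * p.den := (Rat.lt_iff p q).mp hpq
  have hc : q.num * p.den - p.num * q.den = 1 := by
    rcases (abs_eq (by norm_num : (0:ℤ) ≤ 1)).mp hcompat with h | h <;> omega
  have e1 : 1 ≤ r.num * p.den - p.num * r.den := by omega
  have e2 : 1 ≤ q.num * r.den - r.num * q.den := by omega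
  have key : (p.den : ℤ) + q.den ≤ r.den := by
    have hb : (0:ℤ) < p.den := by exact_mod_cast p.pos
    have hd : (0:ℤ) < q.den := by exact_mod_cast q.pos
    nlinarith [mul_le_mul_of_nonneg_left e1 hd.le, mul_le_mul_of_nonneg_left e2 hb.le]
  exact_mod_cast key
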